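/- Every complete lattice that is strictly nondistributive has at least 7 elements: there is an injective map from Fin 7 into L. -/
import Mathlib

private lemma inj7 {L : Type*} (a₀ a₁ a₂ a₃ a₄ a₅ a₆ : L)
    (h₀₁ : a₀ ≠ a₁) (h₀₂ : a₀ ≠ a₂) (h₀₃ : a₀ ≠ a₃) (h₀₄ : a₀ ≠ a₄)
    (h₀₅ : a₀ ≠ a₅) (h₀₆ : a₀ ≠ a₆)
    (h₁₂ : a₁ ≠ a₂) (h₁₃ : a₁ ≠ a₃) (h₁₄ : a₁ ≠ a₄) (h₁₅ : a₁ ≠ a₅) (h₁₆ : a₁ ≠ a₆)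
    (h₂₃ : a₂ ≠ a₃) (h₂₄ : a₂ ≠ a₄) (h₂₅ : a₂ ≠ a₅) (h₂₆ : a₂ ≠ a₆)
    (h₃₄ : a₃ ≠ a₄) (h₃₅ : a₃ ≠ a₅) (h₃₆ : a₃ ≠ a₆)
    (h₄₅ : a₄ ≠ a₅) (h₄₆ : a₄ ≠ a₆)
    (h₅₆ : a₅ ≠ a₆) :
    ∃ f : Fin 7 → L, Function.Injective f := by
  have hnd : ([a₀, a₁, a₂, a₃, a₄, a₅, a₆] : List L).Nodup := by
    simp only [List.nodup_cons, List.mem_cons, List.mem_singleton, List.not_mem_nil,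
      List.nodup_nil, or_false, and_true]
    tauto
  exact ⟨([a₀, a₁, a₂, a₃, a₄, a₅, a₆] : List L).get,
    List.nodup_iff_injective_get.mp hnd⟩

/-- The ten basic distinctness facts among j, m, x, s, u. -/
private lemma base_facts {L : Type*} [Lattice L] (α β x : L)
    (H1 : ¬ x ⊓ (α ⊔ β) ≤ (x ⊓ α) ⊔ (x ⊓ β)) (H2 : ¬ x ≤ α ⊔ β) :
    ((x ⊓ α) ⊔ (x ⊓ β) ≠ x ⊓ (α ⊔ β)) ∧ ((x ⊓ α) ⊔ (x ⊓ β) ≠ x) ∧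
    ((x ⊓ α) ⊔ (x ⊓ β) ≠ α ⊔ β) ∧ ((x ⊓ α) ⊔ (x ⊓ β) ≠ x ⊔ (α ⊔ β)) ∧
    (x ⊓ (α ⊔ β) ≠ x) ∧ (x ⊓ (α ⊔ β) ≠ α ⊔ β) ∧ (x ⊓ (α ⊔ β) ≠ x ⊔ (α ⊔ β)) ∧
    (x ≠ α ⊔ β) ∧ (x ≠ x ⊔ (α ⊔ β)) ∧ (α ⊔ β ≠ x ⊔ (α ⊔ β)) := by
  have hmx : x ⊓ (α ⊔ β) ≤ x := inf_le_left
  have hms : x ⊓ (α ⊔ β) ≤ α ⊔ β := inf_le_right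
  have hmnes : x ⊓ (α ⊔ β) ≠ α ⊔ β := by
    intro h
    have hsx : α ⊔ β ≤ x := by rw [← h]; exact hmx
    apply H1
    calc x ⊓ (α ⊔ β) ≤ α ⊔ β := hms
      _ ≤ (x ⊓ α) ⊔ (x ⊓ β) :=
        sup_le (le_trans (le_inf (le_sup_left.trans hsx) le_rfl) le_sup_left)
          (le_trans (le_inf (le_sup_right.trans hsx) le_rfl) le_sup_right)
  refine ⟨?_, ?_, ?_, ?_, ?_, hmnes, ?_, ?_, ?_, ?_⟩
  · intro h; exact H1 h.ge
  · intro h; apply H1; rw [h]; exact hmx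
  · intro h; apply H1; rw [h]; exact hms
  · intro h; apply H1; rw [h]; exact hmx.trans le_sup_left
  · intro h; apply H2; rw [← h]; exact hms
  · intro h; apply H2
    have hx : x ≤ x ⊓ (α ⊔ β) := by rw [h]; exact le_sup_left
    exact hx.trans hms
  · intro h; apply H2; rw [h]
  · intro h; apply hmnes
    have hsx : α ⊔ β ≤ x := by rw [h]; exact le_sup_right
    exact le_antisymm hms (le_inf hsx le_rfl)
  · intro h; apply H2; rw [h]; exact le_sup_left

/-- The case where (x ⊓ (α ⊔ β)) ⊔ α = α ⊔ β. -/
private lemma cs_case {L : Type*} [Lattice L] (α β x : L)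
    (H1 : ¬ x ⊓ (α ⊔ β) ≤ (x ⊓ α) ⊔ (x ⊓ β)) (H2 : ¬ x ≤ α ⊔ β)
    (hc : (x ⊓ (α ⊔ β)) ⊔ α = α ⊔ β) :
    ∃ f : Fin 7 → L, Function.Injective f := by
  obtain ⟨b1, b2, b3, b4, b5, b6, b7, b8, b9, b10⟩ := base_facts α β x H1 H2
  have hmx : x ⊓ (α ⊔ β) ≤ x := inf_le_left
  have hms : x ⊓ (α ⊔ β) ≤ α ⊔ β := inf_le_right
  -- α is not below x
  have hA : ¬ α ≤ x := by
    intro hax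
    have ham : α ≤ x ⊓ (α ⊔ β) := le_inf hax le_sup_left
    have he : (x ⊓ (α ⊔ β)) ⊔ α = x ⊓ (α ⊔ β) := sup_eq_left.mpr ham
    rw [he] at hc
    exact b6 hc
  have ha_ne_s : α ≠ α ⊔ β := by
    intro h; apply H1; rw [← h]; exact le_sup_left
  have ha_ne_j : α ≠ (x ⊓ α) ⊔ (x ⊓ β) := by
    intro h; apply hA; rw [h]; exact sup_le inf_le_left inf_le_left
  have ha_ne_m : α ≠ x ⊓ (α ⊔ β) := by
    intro h; apply hA; rw [h]; exact inf_le_left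
  have ha_ne_x : α ≠ x := by
    intro h; apply hA; rw [h]
  have ha_ne_u : α ≠ x ⊔ (α ⊔ β) := by
    intro h; apply H2
    have hx : x ≤ α := by rw [h]; exact le_sup_left
    exact hx.trans le_sup_left
  by_cases hd : (x ⊓ (α ⊔ β)) ⊔ β = α ⊔ β
  · -- both c = s and d = s : use α and β
    have hB : ¬ β ≤ x := by
      intro hbx
      have hbm : β ≤ x ⊓ (α ⊔ β) := le_inf hbx le_sup_right
      have he : (x ⊓ (α ⊔ β)) ⊔ β = x ⊓ (α ⊔ β) := sup_eq_left.mpr hbm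
      rw [he] at hd
      exact b6 hd
    have hb_ne_s : β ≠ α ⊔ β := by
      intro h
      apply H1
      have hsb : α ⊔ β ≤ β := h.ge
      calc x ⊓ (α ⊔ β) ≤ x ⊓ β := inf_le_inf_left x hsb
        _ ≤ (x ⊓ α) ⊔ (x ⊓ β) := le_sup_right
    have hab : α ≠ β := by
      intro h
      apply ha_ne_s
      rw [← h, sup_idem]
    refine inj7 ((x ⊓ α) ⊔ (x ⊓ β)) (x ⊓ (α ⊔ β)) x (α ⊔ β) (x ⊔ (α ⊔ β)) α β
      b1 b2 b3 b4 ha_ne_j.symm ?_ b5 b6 b7 ha_ne_m.symm ?_ b8 b9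
      ha_ne_x.symm ?_ b10 ha_ne_s.symm hb_ne_s.symm ha_ne_u.symm ?_ hab
    · intro h; apply hB; rw [← h]; exact sup_le inf_le_left inf_le_left
    · intro h; apply hB; rw [← h]; exact inf_le_left
    · intro h; apply hB; rw [← h]
    · intro h; apply H2
      have hx : x ≤ β := by rw [← h]; exact le_sup_left
      exact hx.trans le_sup_right
  · by_cases hbm : β ≤ x ⊓ (α ⊔ β)
    · -- d = m : use α and p = x ⊓ α
      have hbx : β ≤ x := hbm.trans hmx
      have hp_ne_j : x ⊓ α ≠ (x ⊓ α) ⊔ (x ⊓ β) := by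
        intro h
        apply ha_ne_s
        have hbj : β ≤ (x ⊓ α) ⊔ (x ⊓ β) := le_trans (le_inf hbx le_rfl) le_sup_right
        have hba : β ≤ α := (hbj.trans h.ge).trans inf_le_right
        exact le_antisymm le_sup_left (sup_le le_rfl hba)
      have hpj : x ⊓ α ≤ (x ⊓ α) ⊔ (x ⊓ β) := le_sup_left
      refine inj7 ((x ⊓ α) ⊔ (x ⊓ β)) (x ⊓ (α ⊔ β)) x (α ⊔ β) (x ⊔ (α ⊔ β)) α (x ⊓ α)
        b1 b2 b3 b4 ha_ne_j.symm hp_ne_j.symm b5 b6 b7 ha_ne_m.symm ?_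
        b8 b9 ha_ne_x.symm ?_ b10 ha_ne_s.symm ?_ ha_ne_u.symm ?_ ?_
      · intro h; apply H1; rw [← h]; exact le_sup_left
      · intro h; exact H2 ((h.le.trans inf_le_right).trans le_sup_left)
      · intro h; exact hA (le_sup_left.trans (h.le.trans inf_le_left))
      · intro h
        exact H2 (((le_sup_left.trans h.le).trans inf_le_right).trans le_sup_left)
      · intro h; apply hA; rw [h]; exact inf_le_left
    · -- m < d < s : use α and d = m ⊔ β
      have hmd : x ⊓ (α ⊔ β) ≤ (x ⊓ (α ⊔ β)) ⊔ β := le_sup_left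
      have hds : (x ⊓ (α ⊔ β)) ⊔ β ≤ α ⊔ β := sup_le hms le_sup_right
      have hd_ne_m : (x ⊓ (α ⊔ β)) ⊔ β ≠ x ⊓ (α ⊔ β) := by
        intro h; apply hbm; rw [← h]; exact le_sup_right
      have ha_ne_d : α ≠ (x ⊓ (α ⊔ β)) ⊔ β := by
        intro h
        apply ha_ne_s
        have hba : β ≤ α := by rw [h]; exact le_sup_right
        exact le_antisymm le_sup_left (sup_le le_rfl hba)
      refine inj7 ((x ⊓ α) ⊔ (x ⊓ β)) (x ⊓ (α ⊔ β)) x (α ⊔ β) (x ⊔ (α ⊔ β)) α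
        ((x ⊓ (α ⊔ β)) ⊔ β)
        b1 b2 b3 b4 ha_ne_j.symm ?_ b5 b6 b7 ha_ne_m.symm
        hd_ne_m.symm b8 b9 ha_ne_x.symm ?_ b10 ha_ne_s.symm (Ne.symm hd) ha_ne_u.symm
        ?_ ha_ne_d
      · intro h; apply H1; rw [h]; exact hmd
      · intro h; apply H2; rw [h]; exact hds
      · intro h; apply H2
        have hx : x ≤ (x ⊓ (α ⊔ β)) ⊔ β := by rw [← h]; exact le_sup_left
        exact hx.trans hds

/-- Every strictly nondistributive complete lattice has at least 7
elements: there is an injective map from `Fin 7` into it. -/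
theorem stmt_4 {L : Type*} [CompleteLattice L]
    (h : ∃ α β x : L, ¬ x ⊓ (α ⊔ β) ≤ (x ⊓ α) ⊔ (x ⊓ β) ∧ ¬ x ≤ α ⊔ β) :
    ∃ f : Fin 7 → L, Function.Injective f := by
  obtain ⟨α, β, x, H1, H2⟩ := h
  by_cases hc : (x ⊓ (α ⊔ β)) ⊔ α = α ⊔ β
  · exact cs_case α β x H1 H2 hc
  by_cases hd : (x ⊓ (α ⊔ β)) ⊔ β = α ⊔ β
  · -- apply the symmetric case with α and β swapped
    have H1' : ¬ x ⊓ (β ⊔ α) ≤ (x ⊓ β) ⊔ (x ⊓ α) := by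
      rw [sup_comm β α, sup_comm (x ⊓ β) (x ⊓ α)]; exact H1
    have H2' : ¬ x ≤ β ⊔ α := by rw [sup_comm β α]; exact H2
    have hd' : (x ⊓ (β ⊔ α)) ⊔ β = β ⊔ α := by
      rw [sup_comm β α]; exact hd
    exact cs_case β α x H1' H2' hd'
  · -- m < c < s, m < d < s, c ≠ d
    obtain ⟨b1, b2, b3, b4, b5, b6, b7, b8, b9, b10⟩ := base_facts α β x H1 H2
    have hmx : x ⊓ (α ⊔ β) ≤ x := inf_le_left
    have hms : x ⊓ (α ⊔ β) ≤ α ⊔ β := inf_le_right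
    have hcs : (x ⊓ (α ⊔ β)) ⊔ α ≤ α ⊔ β := sup_le hms le_sup_left
    have hds : (x ⊓ (α ⊔ β)) ⊔ β ≤ α ⊔ β := sup_le hms le_sup_right
    have hcds : ((x ⊓ (α ⊔ β)) ⊔ α) ⊔ ((x ⊓ (α ⊔ β)) ⊔ β) = α ⊔ β :=
      le_antisymm (sup_le hcs hds)
        (sup_le (le_sup_right.trans le_sup_left) (le_sup_right.trans le_sup_right))
    have hcd : (x ⊓ (α ⊔ β)) ⊔ α ≠ (x ⊓ (α ⊔ β)) ⊔ β := by
      intro h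
      apply hc
      have he : ((x ⊓ (α ⊔ β)) ⊔ α) ⊔ ((x ⊓ (α ⊔ β)) ⊔ β) = (x ⊓ (α ⊔ β)) ⊔ α :=
        le_antisymm (sup_le le_rfl h.ge) le_sup_left
      exact he.symm.trans hcds
    have hc_ne_m : (x ⊓ (α ⊔ β)) ⊔ α ≠ x ⊓ (α ⊔ β) := by
      intro h
      apply hd
      rw [h, sup_eq_right.mpr le_sup_left] at hcds
      exact hcds
    have hd_ne_m : (x ⊓ (α ⊔ β)) ⊔ β ≠ x ⊓ (α ⊔ β) := by
      intro h
      apply hc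
      rw [h, sup_eq_left.mpr le_sup_left] at hcds
      exact hcds
    refine inj7 ((x ⊓ α) ⊔ (x ⊓ β)) (x ⊓ (α ⊔ β)) x (α ⊔ β) (x ⊔ (α ⊔ β))
      ((x ⊓ (α ⊔ β)) ⊔ α) ((x ⊓ (α ⊔ β)) ⊔ β)
      b1 b2 b3 b4 ?_ ?_ b5 b6 b7 hc_ne_m.symm hd_ne_m.symm
      b8 b9 ?_ ?_ b10 (Ne.symm hc) (Ne.symm hd) ?_ ?_ hcd
    · intro h; apply H1; rw [h]; exact le_sup_left
    · intro h; apply H1; rw [h]; exact le_sup_left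
    · intro h; apply H2; rw [h]; exact hcs
    · intro h; apply H2; rw [h]; exact hds
    · intro h; apply H2
      have hx : x ≤ (x ⊓ (α ⊔ β)) ⊔ α := by rw [← h]; exact le_sup_left
      exact hx.trans hcs
    · intro h; apply H2
      have hx : x ≤ (x ⊓ (α ⊔ β)) ⊔ β := by rw [← h]; exact le_sup_left
      exact hx.trans hds
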